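/- Let V be a finite-dimensional real inner product space, S : V → V self-adjoint with smallest eigenvalue η₂ ≥ 0 on a subspace on which ω is supported, and ω ∈ Λ^p V an eigenform of S^{[p]} with S^{[p]}ω = μω. If (fᵢ) is an orthonormal eigenbasis of S, then Σᵢ ⟨ι_{fᵢ}ω, ι_{S²(fᵢ)}ω⟩ ≥ η₂ μ |ω|², where η₂ is the smallest eigenvalue of S among directions fᵢ with ι_{fᵢ}ω ≠ 0. -/

import Mathlib

noncomputable section
open Finset

/-- `m`-dimensional Euclidean space. -/
abbrev E (m : ℕ) := EuclideanSpace ℝ (Fin m)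

/-- standard orthonormal basis vector -/
def sb (m : ℕ) (i : Fin m) : E m := EuclideanSpace.single i 1

/-- the induced inner product on `p`-forms (computed via the standard basis) -/
def rInner (m p : ℕ) (f g : (Fin p → E m) → ℝ) : ℝ :=
  (Nat.factorial p : ℝ)⁻¹ *
    ∑ σ : Fin p → Fin m, f (fun k => sb m (σ k)) * g (fun k => sb m (σ k))

/-- the induced norm on `p`-forms -/
def rNorm (m p : ℕ) (f : (Fin p → E m) → ℝ) : ℝ := Real.sqrt (rInner m p f f)

/-- the derivation extension `S^{[p]}` of an endomorphism `S` to `p`-forms: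
`S^{[p]}ω(X₁,…,X_p) = Σᵢ ω(X₁,…,S Xᵢ,…,X_p)` -/
def sder (m : ℕ) (S : E m →ₗ[ℝ] E m) (p : ℕ) (f : (Fin p → E m) → ℝ) :
    (Fin p → E m) → ℝ :=
  fun X => ∑ i : Fin p, f (Function.update X i (S (X i)))

/-- interior product of a vector with a `(p+1)`-form -/
def iprod (m p : ℕ) (v : E m) (f : (Fin (p+1) → E m) → ℝ) : (Fin p → E m) → ℝ :=
  fun Y => f (Fin.cons v Y)

/-- wedge of a vector (via the metric) with a `p`-form -/
def wedgeV (m p : ℕ) (v : E m) (f : (Fin p → E m) → ℝ) : (Fin (p+1) → E m) → ℝ :=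
  fun Y => ∑ i : Fin (p+1),
    (-1 : ℝ) ^ (i : ℕ) * (inner ℝ v (Y i) : ℝ) * f (fun k => Y (i.succAbove k))

/-- interior product of the `s`-vector `X₁ ∧ ⋯ ∧ X_s` with an `(s+t)`-form:
`(Y₁,…,Y_t) ↦ ω(X_s,…,X₁,Y₁,…,Y_t)` -/
def iprodMulti (m s t : ℕ) (X : Fin s → E m) (f : (Fin (s+t) → E m) → ℝ) :
    (Fin t → E m) → ℝ :=
  fun Y => f (Fin.append (fun k => X k.rev) Y)

/-- wedge `X₁ ∧ ⋯ ∧ X_s ∧ ψ` of an `s`-tuple of vectors (via the metric) with a `t`-form -/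
def wedgeMulti (m s t : ℕ) (X : Fin s → E m) (f : (Fin t → E m) → ℝ) :
    (Fin (s+t) → E m) → ℝ :=
  fun Y => ((Nat.factorial s * Nat.factorial t : ℕ) : ℝ)⁻¹ *
    ∑ σ : Equiv.Perm (Fin (s+t)),
      ((Equiv.Perm.sign σ : ℤ) : ℝ) *
        Matrix.det (Matrix.of fun i j : Fin s =>
          (inner ℝ (X i) (Y (σ (Fin.castAdd t j))) : ℝ)) *
        f (fun k => Y (σ (Fin.natAdd s k)))

namespace Stmt15

lemma eu_decomp {m : ℕ} (u : E m) : u = ∑ j, u j • sb m j := by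
  ext k
  rw [WithLp.ofLp_sum, Finset.sum_apply]
  simp [sb, EuclideanSpace.single_apply]

lemma sum_cons_split {m p : ℕ} (F : (Fin (p+1) → Fin m) → ℝ) :
    ∑ σ : Fin (p+1) → Fin m, F σ
      = ∑ j : Fin m, ∑ τ : Fin p → Fin m, F (Fin.cons j τ) := by
  have h := (Fintype.sum_equiv (Fin.consEquiv fun _ => Fin m)
    (fun jt => F (Fin.cons jt.1 jt.2)) F (fun x => rfl)).symm
  rw [h, Fintype.sum_prod_type]

lemma helper_expand {m p : ℕ} (a b : Fin m → ℝ) (A : Fin m → (Fin p → Fin m) → ℝ) (c : ℝ) :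
    c * ∑ τ : Fin p → Fin m, (∑ j, a j * A j τ) * (∑ k, b k * A k τ)
      = ∑ j, ∑ k, a j * b k * (c * ∑ τ, A j τ * A k τ) := by
  have step1 : c * ∑ τ : Fin p → Fin m, (∑ j, a j * A j τ) * (∑ k, b k * A k τ)
      = ∑ τ : Fin p → Fin m, ∑ j, ∑ k, c * ((a j * A j τ) * (b k * A k τ)) := by
    rw [Finset.mul_sum]
    refine Finset.sum_congr rfl fun τ _ => ?_
    rw [Finset.sum_mul_sum, Finset.mul_sum]
    refine Finset.sum_congr rfl fun j _ => ?_
    rw [Finset.mul_sum]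
  have step2 : (∑ j, ∑ k, a j * b k * (c * ∑ τ : Fin p → Fin m, A j τ * A k τ))
      = ∑ j, ∑ k, ∑ τ : Fin p → Fin m, c * ((a j * A j τ) * (b k * A k τ)) := by
    refine Finset.sum_congr rfl fun j _ => Finset.sum_congr rfl fun k _ => ?_
    rw [Finset.mul_sum, Finset.mul_sum]
    exact Finset.sum_congr rfl fun τ _ => by ring
  rw [step1, step2, Finset.sum_comm]
  exact Finset.sum_congr rfl fun j _ => Finset.sum_comm

end Stmt15

open Stmt15 in
/-- if `S` is self-adjoint with orthonormal eigenbasis `(fᵢ)`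
(eigenvalues `μeig i`), `ω` is an eigenform of `S^{[p]}` with eigenvalue `μ`, and
`η₂ ≥ 0` is a lower bound for the eigenvalues of `S` in those directions `fᵢ` with
`ι_{fᵢ}ω ≠ 0`, then `Σᵢ ⟨ι_{fᵢ}ω, ι_{S²fᵢ}ω⟩ ≥ η₂ μ |ω|²`. -/
theorem sum_contractions_S_sq_ge (m p : ℕ) (S : E m →ₗ[ℝ] E m)
    (hSsym : ∀ x y : E m, (inner ℝ (S x) y : ℝ) = inner ℝ x (S y))
    (f : OrthonormalBasis (Fin m) ℝ (E m)) (μeig : Fin m → ℝ)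
    (heig : ∀ i, S (f i) = μeig i • f i)
    (ω : (E m) [⋀^Fin (p+1)]→ₗ[ℝ] ℝ) (μ : ℝ)
    (hω : ∀ X, sder m S (p+1) ⇑ω X = μ * ω X)
    (η₂ : ℝ) (hη₂ : 0 ≤ η₂)
    (hmin : ∀ i, iprod m p (f i) ⇑ω ≠ 0 → η₂ ≤ μeig i) :
    η₂ * μ * rInner m (p+1) ⇑ω ⇑ω ≤
      ∑ i : Fin m, rInner m p (iprod m p (f i) ⇑ω) (iprod m p (S (S (f i))) ⇑ω) := by
  classical
  set g : E m → (Fin p → E m) → ℝ := fun v Y => ω (Fin.cons v Y) with hgdef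
  have hiprod : ∀ v, iprod m p v ⇑ω = g v := fun v => rfl
  -- pointwise expansion of g in its vector argument
  have hg_expand : ∀ (u : E m) (Y : Fin p → E m), g u Y = ∑ j, u j * g (sb m j) Y := by
    intro u Y
    show ω (Fin.cons u Y) = ∑ j, u j * ω (Fin.cons (sb m j) Y)
    have h0 : (Fin.cons u Y : Fin (p+1) → E m)
        = Function.update (Fin.cons u Y : Fin (p+1) → E m) 0 (∑ j, u j • sb m j) := by
      rw [show (∑ j, u j • sb m j) = u from (eu_decomp u).symm]
      rw [Fin.update_cons_zero]
    rw [h0, AlternatingMap.map_update_sum]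
    refine Finset.sum_congr rfl fun j _ => ?_
    rw [AlternatingMap.map_update_smul, Fin.update_cons_zero]
    simp
  -- smul in the vector argument
  have hg_smul : ∀ (c : ℝ) (v : E m) (Y : Fin p → E m), g (c • v) Y = c * g v Y := by
    intro c v Y
    show ω (Fin.cons (c • v) Y) = c * ω (Fin.cons v Y)
    have h0 : (Fin.cons (c • v) Y : Fin (p+1) → E m)
        = Function.update (Fin.cons v Y : Fin (p+1) → E m) 0 (c • v) := by
      rw [Fin.update_cons_zero]
    rw [h0, AlternatingMap.map_update_smul, Fin.update_cons_zero]
    simp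
  -- expansion of rInner of two contractions
  have hB_expand : ∀ u v : E m, rInner m p (g u) (g v)
      = ∑ j, ∑ k, u j * v k * rInner m p (g (sb m j)) (g (sb m k)) := by
    intro u v
    unfold rInner
    simp_rw [hg_expand u, hg_expand v]
    exact helper_expand (fun j => u j) (fun k => v k)
      (fun j τ => g (sb m j) (fun k => sb m (τ k))) _
  have hR_smul : ∀ (c : ℝ) (u v : E m),
      rInner m p (g u) (g (c • v)) = c * rInner m p (g u) (g v) := by
    intro c u v
    unfold rInner
    have hs : ∑ τ : Fin p → Fin m, (g u fun k => sb m (τ k)) * g (c • v) (fun k => sb m (τ k))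
        = c * ∑ τ : Fin p → Fin m, (g u fun k => sb m (τ k)) * g v (fun k => sb m (τ k)) := by
      rw [Finset.mul_sum]
      refine Finset.sum_congr rfl fun τ _ => ?_
      rw [hg_smul]
      ring
    rw [hs]
    ring
  have hR_nonneg : ∀ u : E m, 0 ≤ rInner m p (g u) (g u) := by
    intro u
    unfold rInner
    apply mul_nonneg (by positivity)
    exact Finset.sum_nonneg fun τ _ => mul_self_nonneg _
  -- Parseval step
  have hSum : ∀ j k : Fin m, (∑ i, (f i) j * (S (f i)) k) = (S (sb m k)) j := by
    intro j k
    have h1 : ∀ i : Fin m, (f i) j = (inner ℝ (sb m j) (f i) : ℝ) := by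
      intro i
      rw [sb, EuclideanSpace.inner_single_left]
      simp only [map_one, one_mul]
    have h2 : ∀ i : Fin m, (S (f i)) k = (inner ℝ (f i) (S (sb m k)) : ℝ) := by
      intro i
      rw [← hSsym, sb, EuclideanSpace.inner_single_right]
      simp only [one_mul, starRingEnd_apply, star_trivial]
    simp_rw [h1, h2]
    rw [f.sum_inner_mul_inner, sb, EuclideanSpace.inner_single_left]
    simp only [map_one, one_mul]
  -- trace step : basis independence
  have htrace : ∑ i, rInner m p (g (f i)) (g (S (f i)))
      = ∑ k, rInner m p (g (S (sb m k))) (g (sb m k)) := by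
    have lhs_eq : ∑ i, rInner m p (g (f i)) (g (S (f i)))
        = ∑ j, ∑ k, (S (sb m k)) j * rInner m p (g (sb m j)) (g (sb m k)) := by
      rw [Finset.sum_congr rfl (fun i _ => hB_expand (f i) (S (f i)))]
      rw [Finset.sum_comm]
      refine Finset.sum_congr rfl fun j _ => ?_
      rw [Finset.sum_comm]
      refine Finset.sum_congr rfl fun k _ => ?_
      rw [← hSum j k, Finset.sum_mul]
    have rhs_eq : ∑ k, rInner m p (g (S (sb m k))) (g (sb m k))
        = ∑ j, ∑ k, (S (sb m k)) j * rInner m p (g (sb m j)) (g (sb m k)) := by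
      rw [Finset.sum_comm]
      refine Finset.sum_congr rfl fun k _ => ?_
      rw [hB_expand (S (sb m k)) (sb m k)]
      refine Finset.sum_congr rfl fun j _ => ?_
      have hek : ∀ k' : Fin m, (sb m k) k' = if k' = k then (1:ℝ) else 0 := by
        intro k'
        rw [sb]
        simp [EuclideanSpace.single_apply]
      simp_rw [hek]
      rw [Finset.sum_eq_single k]
      · simp
      · intro b _ hb
        simp [hb]
      · intro h
        exact absurd (Finset.mem_univ k) h
    rw [lhs_eq, rhs_eq]
  -- cons decompositions
  have hupd0 : ∀ (σ : Fin (p+1) → Fin m) (v : E m),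
      Function.update (fun l => sb m (σ l)) (0 : Fin (p+1)) v
        = Fin.cons v (fun t : Fin p => sb m (σ t.succ)) := by
    intro σ v
    funext x
    induction x using Fin.cases with
    | zero => simp
    | succ t =>
        rw [Function.update_of_ne (Fin.succ_ne_zero t)]
        simp
  have hconsσ : ∀ (σ : Fin (p+1) → Fin m),
      (fun l => sb m (σ l)) = Fin.cons (sb m (σ 0)) (fun t : Fin p => sb m (σ t.succ)) := by
    intro σ
    funext x
    induction x using Fin.cases with
    | zero => simp
    | succ t => simp
  have hfact : ((p+1).factorial : ℝ) ≠ 0 := Nat.cast_ne_zero.mpr (Nat.factorial_ne_zero _)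
  have hfactp : ((p).factorial : ℝ) ≠ 0 := Nat.cast_ne_zero.mpr (Nat.factorial_ne_zero _)
  -- the `i = 0` term of the derivation identity
  have h0term : ∑ σ : Fin (p+1) → Fin m,
      ω (Function.update (fun l => sb m (σ l)) (0 : Fin (p+1)) (S (sb m (σ 0)))) * ω (fun l => sb m (σ l))
      = (Nat.factorial p : ℝ) * ∑ k, rInner m p (g (S (sb m k))) (g (sb m k)) := by
    have hterm : ∀ σ : Fin (p+1) → Fin m,
        ω (Function.update (fun l => sb m (σ l)) (0 : Fin (p+1)) (S (sb m (σ 0)))) * ω (fun l => sb m (σ l))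
        = g (S (sb m (σ 0))) (fun t : Fin p => sb m (σ t.succ))
          * g (sb m (σ 0)) (fun t : Fin p => sb m (σ t.succ)) := by
      intro σ
      rw [hupd0]
      congr 1
      rw [hconsσ σ]
    simp_rw [hterm]
    rw [sum_cons_split (fun σ => g (S (sb m (σ 0))) (fun t : Fin p => sb m (σ t.succ))
      * g (sb m (σ 0)) (fun t : Fin p => sb m (σ t.succ)))]
    rw [Finset.mul_sum]
    refine Finset.sum_congr rfl fun j _ => ?_
    simp only [Fin.cons_zero, Fin.cons_succ]
    unfold rInner
    rw [← mul_assoc, mul_inv_cancel₀ hfactp, one_mul]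
  -- every term of the derivation identity equals the `i = 0` term
  have hall : ∀ i : Fin (p+1), ∑ σ : Fin (p+1) → Fin m,
      ω (Function.update (fun l => sb m (σ l)) i (S (sb m (σ i)))) * ω (fun l => sb m (σ l))
      = ∑ σ : Fin (p+1) → Fin m,
      ω (Function.update (fun l => sb m (σ l)) (0 : Fin (p+1)) (S (sb m (σ 0)))) * ω (fun l => sb m (σ l)) := by
    intro i
    rcases eq_or_ne i 0 with rfl | hi
    · rfl
    refine Fintype.sum_equiv
      (Equiv.arrowCongr (Equiv.swap (0 : Fin (p+1)) i) (Equiv.refl (Fin m))) _ _ ?_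
    intro σ
    have hσ' : ((Equiv.arrowCongr (Equiv.swap (0 : Fin (p+1)) i) (Equiv.refl (Fin m))) σ)
        = σ ∘ (Equiv.swap (0 : Fin (p+1)) i) := by
      funext x
      simp [Equiv.arrowCongr_apply]
    rw [hσ']
    have h2 : (σ ∘ (Equiv.swap (0 : Fin (p+1)) i)) 0 = σ i := by
      simp [Equiv.swap_apply_left]
    rw [h2]
    have h1 : (fun l => sb m ((σ ∘ (Equiv.swap (0 : Fin (p+1)) i)) l))
        = (fun l => sb m (σ l)) ∘ (Equiv.swap (0 : Fin (p+1)) i) := rfl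
    rw [h1]
    have h3 : Function.update ((fun l => sb m (σ l)) ∘ (Equiv.swap (0 : Fin (p+1)) i))
          (0 : Fin (p+1)) (S (sb m (σ i)))
        = (Function.update (fun l => sb m (σ l)) i (S (sb m (σ i))))
            ∘ (Equiv.swap (0 : Fin (p+1)) i) := by
      rw [Function.update_comp_equiv]
      simp [Equiv.symm_swap, Equiv.swap_apply_right]
    rw [h3]
    rw [ω.map_swap _ (Ne.symm hi), ω.map_swap _ (Ne.symm hi)]
    ring
  -- the eigenvalue identity
  have hmu : ∑ k, rInner m p (g (S (sb m k))) (g (sb m k)) = μ * rInner m (p+1) ⇑ω ⇑ω := by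
    have hbig : ∑ σ : Fin (p+1) → Fin m,
        (sder m S (p+1) ⇑ω (fun l => sb m (σ l))) * ω (fun l => sb m (σ l))
        = ∑ σ : Fin (p+1) → Fin m, μ * (ω (fun l => sb m (σ l)) * ω (fun l => sb m (σ l))) := by
      refine Finset.sum_congr rfl fun σ _ => ?_
      rw [hω]
      ring
    have hL : ∑ σ : Fin (p+1) → Fin m,
        (sder m S (p+1) ⇑ω (fun l => sb m (σ l))) * ω (fun l => sb m (σ l))
        = ((p+1).factorial : ℝ) * ∑ k, rInner m p (g (S (sb m k))) (g (sb m k)) := by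
      unfold sder
      simp_rw [Finset.sum_mul]
      rw [Finset.sum_comm]
      have hi0 : ∀ i : Fin (p+1), ∑ σ : Fin (p+1) → Fin m,
          ω (Function.update (fun l => sb m (σ l)) i (S ((fun l => sb m (σ l)) i)))
            * ω (fun l => sb m (σ l))
          = (Nat.factorial p : ℝ) * ∑ k, rInner m p (g (S (sb m k))) (g (sb m k)) := by
        intro i
        rw [show (∑ σ : Fin (p+1) → Fin m,
          ω (Function.update (fun l => sb m (σ l)) i (S ((fun l => sb m (σ l)) i)))
            * ω (fun l => sb m (σ l)))
          = ∑ σ : Fin (p+1) → Fin m,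
          ω (Function.update (fun l => sb m (σ l)) i (S (sb m (σ i)))) * ω (fun l => sb m (σ l)) from rfl]
        rw [hall i, h0term]
      simp_rw [hi0]
      rw [Finset.sum_const, Finset.card_univ, Fintype.card_fin, nsmul_eq_mul, ← mul_assoc]
      congr 1
      rw [Nat.factorial_succ]
      push_cast
      ring
    have hR : ∑ σ : Fin (p+1) → Fin m, μ * (ω (fun l => sb m (σ l)) * ω (fun l => sb m (σ l)))
        = ((p+1).factorial : ℝ) * (μ * rInner m (p+1) ⇑ω ⇑ω) := by
      rw [← Finset.mul_sum]
      unfold rInner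
      field_simp
    have hfin := hbig
    rw [hL, hR] at hfin
    exact mul_left_cancel₀ hfact hfin
  -- eigen decomposition of the right-hand side
  have hRHS : ∀ i : Fin m, rInner m p (iprod m p (f i) ⇑ω) (iprod m p (S (S (f i))) ⇑ω)
      = (μeig i * μeig i) * rInner m p (g (f i)) (g (f i)) := by
    intro i
    have hS2 : S (S (f i)) = (μeig i * μeig i) • f i := by
      rw [heig, map_smul, heig, smul_smul]
    rw [hiprod, hiprod, hS2, hR_smul]
  have hMid : ∀ i : Fin m, rInner m p (g (f i)) (g (S (f i)))
      = μeig i * rInner m p (g (f i)) (g (f i)) := by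
    intro i
    rw [heig, hR_smul]
  -- assembly
  have hkey : η₂ * μ * rInner m (p+1) ⇑ω ⇑ω
      = ∑ i, η₂ * (μeig i * rInner m p (g (f i)) (g (f i))) := by
    rw [← Finset.mul_sum]
    have hsum : ∑ i, μeig i * rInner m p (g (f i)) (g (f i)) = μ * rInner m (p+1) ⇑ω ⇑ω := by
      simp_rw [← hMid]
      rw [htrace, hmu]
    rw [hsum, ← mul_assoc]
  rw [hkey]
  refine Finset.sum_le_sum fun i _ => ?_
  rw [hRHS]
  by_cases hz : iprod m p (f i) ⇑ω = 0
  · have hzero : rInner m p (g (f i)) (g (f i)) = 0 := by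
      rw [← hiprod, hz]
      unfold rInner
      simp
    rw [hzero]
    simp
  · have hμi : η₂ ≤ μeig i := hmin i hz
    have hμnn : 0 ≤ μeig i := le_trans hη₂ hμi
    have hb := hR_nonneg (f i)
    calc η₂ * (μeig i * rInner m p (g (f i)) (g (f i)))
        ≤ μeig i * (μeig i * rInner m p (g (f i)) (g (f i))) := by
          exact mul_le_mul_of_nonneg_right hμi (mul_nonneg hμnn hb)
      _ = μeig i * μeig i * rInner m p (g (f i)) (g (f i)) := by ring
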